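/- Let q be an odd prime power such that for every power of two n, x^n + 1 factors over F_q as a product of two distinct monic irreducible polynomials of degree n/2 that are reciprocals of each other (this holds for q ≡ 3 or 5 (mod 8)). Let δ be a real number with 0 < δ < (q−1)/q and H_q(δ) < 1/4. Then there exists N such that for every power of two n ≥ N there exists a ∈ R = F_q[x]/(x^n + 1) such that every nonzero codeword of the double negacirculant code C_a has Hamming weight greater than 2δn. -/

import Mathlib

open Polynomial

/-- The `n × n` negacirculant matrix with first row `a`. -/
def negacirculantMatrix {F : Type*} [Ring F] {n : ℕ} (a : Fin n → F) :
    Matrix (Fin n) (Fin n) F :=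
  Matrix.of fun i j => if (i : ℕ) ≤ (j : ℕ) then a (j - i) else - a (j - i)

/-- The monic reciprocal polynomial of `h` (for `h` with `h 0 ≠ 0`). -/
noncomputable def recip {F : Type*} [Field F] (h : F[X]) : F[X] :=
  C (h.coeff 0)⁻¹ * h.reverse

/-- The `q`-ary entropy function
`H_q(x) = x log_q(q−1) − x log_q x − (1−x) log_q(1−x)`. -/
noncomputable def qEntropy (q : ℕ) (x : ℝ) : ℝ :=
  x * Real.logb q (q - 1) - x * Real.logb q x - (1 - x) * Real.logb q (1 - x)

lemma ball_bound {F : Type*} [Fintype F] [DecidableEq F] [Zero F]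
    {q : ℕ} (hcard : Fintype.card F = q) (hq : 2 ≤ q)
    {ι : Type*} [Fintype ι] [DecidableEq ι]
    {δ : ℝ} (hδ0 : 0 < δ) (hδ1 : δ < (q - 1 : ℝ) / q)
    {r : ℕ} (hr : (r : ℝ) ≤ (Fintype.card ι) * δ) :
    ((Finset.univ.filter fun v : ι → F => hammingNorm v ≤ r).card : ℝ) ≤
      (q : ℝ) ^ ((Fintype.card ι : ℝ) * qEntropy q δ) := by
  set m := Fintype.card ι with hm
  have hq0 : (0:ℝ) < q := by positivity
  have hq1 : (1:ℝ) < q := by exact_mod_cast Nat.lt_of_lt_of_le one_lt_two hq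
  have hq1' : (0:ℝ) < (q:ℝ) - 1 := by linarith
  have hδ1' : δ < 1 := lt_of_lt_of_le hδ1 (by rw [div_le_one hq0]; linarith)
  have hB0 : (0:ℝ) < 1 - δ := by linarith
  have hA0 : (0:ℝ) < δ / ((q:ℝ) - 1) := by positivity
  set A := δ / ((q:ℝ) - 1) with hA
  set B := (1:ℝ) - δ with hB
  have hAB : A ≤ B := by
    have h := (lt_div_iff₀ hq0).mp hδ1
    rw [hA, div_le_iff₀ hq1', hB]
    nlinarith
  set μ : F → ℝ := fun x => if x = 0 then B else A with hμ
  have hμnn : ∀ x : F, 0 ≤ μ x := by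
    intro x
    by_cases h : x = 0
    · simp [hμ, h]; linarith
    · simp [hμ, h]; positivity
  -- sum of μ over F is 1
  have hsum1 : ∑ x : F, μ x = 1 := by
    rw [hμ, Finset.sum_ite, Finset.sum_const, Finset.sum_const]
    have h1 : (Finset.univ.filter fun x : F => x = 0).card = 1 := by
      rw [Finset.filter_eq', if_pos (Finset.mem_univ _), Finset.card_singleton]
    have h2 : (Finset.univ.filter fun x : F => ¬ x = 0).card = q - 1 := by
      have := Finset.card_filter_add_card_filter_not (s := (Finset.univ : Finset F))
        (p := fun x : F => x = 0)
      rw [Finset.card_univ, hcard] at this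
      omega
    rw [h1, h2, one_smul, nsmul_eq_mul]
    have hc : ((q - 1 : ℕ) : ℝ) = (q:ℝ) - 1 := by
      have h1q : (1:ℕ) ≤ q := by omega
      push_cast [Nat.cast_sub h1q]; ring
    rw [hc, hB, hA]
    field_simp
    ring
  -- sum over all vectors of the product weight is 1
  have hsumall : ∑ v : ι → F, ∏ i, μ (v i) = 1 := by
    rw [← Fintype.piFinset_univ, ← Finset.prod_univ_sum]
    simp [hsum1]
  -- product weight in terms of hamming norm
  have hprod : ∀ v : ι → F, ∏ i, μ (v i) = A ^ (hammingNorm v) * B ^ (m - hammingNorm v) := by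
    intro v
    rw [← Finset.prod_filter_mul_prod_filter_not Finset.univ (fun i => v i ≠ 0)]
    have e1 : ∀ i ∈ Finset.univ.filter (fun i => v i ≠ 0), μ (v i) = A := by
      intro i hi; simp only [Finset.mem_filter] at hi; simp [hμ, hi.2]
    have e2 : ∀ i ∈ Finset.univ.filter (fun i => ¬ v i ≠ 0), μ (v i) = B := by
      intro i hi; simp only [Finset.mem_filter, not_not] at hi; simp [hμ, hi.2]
    rw [Finset.prod_congr rfl e1, Finset.prod_congr rfl e2, Finset.prod_const, Finset.prod_const]
    have hcard1 : (Finset.univ.filter fun i => v i ≠ 0).card = hammingNorm v := rfl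
    have hcard2 : (Finset.univ.filter fun i => ¬ v i ≠ 0).card = m - hammingNorm v := by
      have := Finset.card_filter_add_card_filter_not (s := (Finset.univ : Finset ι))
        (p := fun i => v i ≠ 0)
      rw [Finset.card_univ] at this
      omega
    rw [hcard1, hcard2]
  have hlogq : Real.log q ≠ 0 := ne_of_gt (Real.log_pos hq1)
  -- the key identity
  have hkey : (q : ℝ) ^ (-((m:ℝ) * qEntropy q δ)) = A ^ ((m:ℝ) * δ) * B ^ ((m:ℝ) * (1 - δ)) := by
    rw [Real.rpow_def_of_pos hq0, Real.rpow_def_of_pos hA0, Real.rpow_def_of_pos hB0,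
      ← Real.exp_add]
    congr 1
    rw [hA, Real.log_div (ne_of_gt hδ0) (ne_of_gt hq1')]
    simp only [qEntropy, Real.logb, hB]
    field_simp
    ring
  -- helper identity
  have gen : ∀ x : ℝ, A ^ x * B ^ ((m:ℝ) - x) = B ^ ((m:ℝ)) * (A/B) ^ x := by
    intro x
    have hBx : B ^ x ≠ 0 := (Real.rpow_pos_of_pos hB0 x).ne'
    rw [Real.div_rpow hA0.le hB0.le, Real.rpow_sub hB0]
    field_simp
  -- lower bound on weight of small-norm vectors
  have hlow : ∀ v : ι → F, hammingNorm v ≤ r →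
      (q : ℝ) ^ (-((m:ℝ) * qEntropy q δ)) ≤ ∏ i, μ (v i) := by
    intro v hv
    rw [hprod v, hkey]
    have hwm : hammingNorm v ≤ m := by
      have : (Finset.univ.filter fun i => v i ≠ 0).card ≤ (Finset.univ : Finset ι).card :=
        Finset.card_filter_le _ _
      rwa [Finset.card_univ] at this
    set w := hammingNorm v with hw
    have e1 : A ^ w * B ^ (m - w) = A ^ (w:ℝ) * B ^ ((m:ℝ) - (w:ℝ)) := by
      rw [← Real.rpow_natCast A w, ← Real.rpow_natCast B (m - w), Nat.cast_sub hwm]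
    have e2 : (m:ℝ) * (1 - δ) = (m:ℝ) - (m:ℝ) * δ := by ring
    rw [e1, e2, gen, gen]
    apply mul_le_mul_of_nonneg_left _ (Real.rpow_pos_of_pos hB0 _).le
    apply Real.rpow_le_rpow_of_exponent_ge (by positivity) (by
      rw [div_le_one hB0]; exact hAB)
    calc (w:ℝ) ≤ r := by exact_mod_cast hv
      _ ≤ (m:ℝ) * δ := hr
  -- put it together
  have hmain : ((Finset.univ.filter fun v : ι → F => hammingNorm v ≤ r).card : ℝ) *
      (q : ℝ) ^ (-((m:ℝ) * qEntropy q δ)) ≤ 1 := by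
    have step1 : ∑ v ∈ Finset.univ.filter (fun v : ι → F => hammingNorm v ≤ r),
        (q : ℝ) ^ (-((m:ℝ) * qEntropy q δ)) ≤
        ∑ v ∈ Finset.univ.filter (fun v : ι → F => hammingNorm v ≤ r), ∏ i, μ (v i) :=
      Finset.sum_le_sum fun v hv => hlow v (Finset.mem_filter.mp hv).2
    rw [Finset.sum_const, nsmul_eq_mul] at step1
    have step2 : ∑ v ∈ Finset.univ.filter (fun v : ι → F => hammingNorm v ≤ r), ∏ i, μ (v i) ≤
        ∑ v : ι → F, ∏ i, μ (v i) := by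
      apply Finset.sum_le_sum_of_subset_of_nonneg (Finset.filter_subset _ _)
      intro v _ _
      exact Finset.prod_nonneg fun i _ => hμnn (v i)
    calc _ ≤ _ := step1
      _ ≤ _ := step2
      _ = 1 := hsumall
  calc ((Finset.univ.filter fun v : ι → F => hammingNorm v ≤ r).card : ℝ)
      = (((Finset.univ.filter fun v : ι → F => hammingNorm v ≤ r).card : ℝ) *
        (q : ℝ) ^ (-((m:ℝ) * qEntropy q δ))) * (q : ℝ) ^ ((m:ℝ) * qEntropy q δ) := by
        rw [mul_assoc, ← Real.rpow_add hq0]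
        simp
    _ ≤ 1 * (q : ℝ) ^ ((m:ℝ) * qEntropy q δ) :=
        mul_le_mul_of_nonneg_right hmain (Real.rpow_pos_of_pos hq0 _).le
    _ = (q : ℝ) ^ ((m:ℝ) * qEntropy q δ) := one_mul _

noncomputable def vecPoly {F : Type*} [Semiring F] {n : ℕ} (v : Fin n → F) : F[X] :=
  ∑ i : Fin n, C (v i) * X ^ (i : ℕ)

lemma vecPoly_coeff {F : Type*} [Semiring F] {n : ℕ} (v : Fin n → F) (i : Fin n) :
    (vecPoly v).coeff (i : ℕ) = v i := by
  rw [vecPoly, finset_sum_coeff]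
  rw [Finset.sum_eq_single i]
  · simp
  · intro j _ hj
    rw [coeff_C_mul, coeff_X_pow, if_neg (by simpa [Fin.val_eq_val] using (Ne.symm hj)), mul_zero]
  · intro h; exact absurd (Finset.mem_univ i) h

lemma vecPoly_inj {F : Type*} [Semiring F] {n : ℕ} {v w : Fin n → F}
    (h : vecPoly v = vecPoly w) : v = w := by
  funext i
  rw [← vecPoly_coeff v i, ← vecPoly_coeff w i, h]

lemma vecPoly_sub {F : Type*} [Ring F] {n : ℕ} (v w : Fin n → F) :
    vecPoly (v - w) = vecPoly v - vecPoly w := by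
  simp [vecPoly, Finset.sum_sub_distrib, sub_mul]

lemma vecPoly_degree {F : Type*} [Semiring F] {n : ℕ} (v : Fin n → F) :
    (vecPoly v).degree < (n : ℕ) := by
  apply lt_of_le_of_lt (degree_sum_le _ _)
  rw [Finset.sup_lt_iff (by exact_mod_cast WithBot.bot_lt_coe n)]
  intro i _
  exact lt_of_le_of_lt (degree_C_mul_X_pow_le _ _) (by exact_mod_cast i.isLt)

lemma vecPoly_mul_congr {F : Type*} [CommRing F] {n : ℕ} (hn : 0 < n) (c a : Fin n → F) :
    (X ^ n + 1 : F[X]) ∣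
      vecPoly c * vecPoly a - vecPoly (Matrix.vecMul c (negacirculantMatrix a)) := by
  classical
  haveI : NeZero n := ⟨hn.ne'⟩
  have hPL : vecPoly (Matrix.vecMul c (negacirculantMatrix a)) =
      ∑ i : Fin n, ∑ j : Fin n,
        C (c i * (if (i : ℕ) ≤ ((i + j : Fin n) : ℕ) then a j else - a j)) *
          X ^ (((i + j : Fin n)) : ℕ) := by
    rw [vecPoly]
    have hv : ∀ j' : Fin n, Matrix.vecMul c (negacirculantMatrix a) j' =
        ∑ i : Fin n, c i * (if (i : ℕ) ≤ (j' : ℕ) then a (j' - i) else - a (j' - i)) := by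
      intro j'
      rfl
    simp_rw [hv, map_sum, Finset.sum_mul]
    rw [Finset.sum_comm]
    refine Finset.sum_congr rfl fun i _ => ?_
    rw [← Equiv.sum_comp (Equiv.addLeft i) (fun j' =>
      C (c i * (if (i : ℕ) ≤ (j' : ℕ) then a (j' - i) else - a (j' - i))) * X ^ (j' : ℕ))]
    refine Finset.sum_congr rfl fun j _ => ?_
    simp only [Equiv.coe_addLeft, add_sub_cancel_left]
  have hPcPa : vecPoly c * vecPoly a =
      ∑ i : Fin n, ∑ j : Fin n, C (c i * a j) * X ^ ((i : ℕ) + (j : ℕ)) := by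
    rw [vecPoly, vecPoly, Finset.sum_mul_sum]
    refine Finset.sum_congr rfl fun i _ => Finset.sum_congr rfl fun j _ => ?_
    rw [C_mul, pow_add]
    ring
  rw [hPcPa, hPL, ← Finset.sum_sub_distrib]
  refine Finset.dvd_sum fun i _ => ?_
  rw [← Finset.sum_sub_distrib]
  refine Finset.dvd_sum fun j _ => ?_
  by_cases hij : (i : ℕ) + (j : ℕ) < n
  · have hval : ((i + j : Fin n) : ℕ) = (i : ℕ) + (j : ℕ) := by
      rw [Fin.val_add, Nat.mod_eq_of_lt hij]
    rw [hval, if_pos (Nat.le_add_right _ _)]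
    simp
  · push_neg at hij
    have hval : ((i + j : Fin n) : ℕ) = (i : ℕ) + (j : ℕ) - n := by
      rw [Fin.val_add]
      have h2 : (i : ℕ) + (j : ℕ) - n < n := by omega
      conv_lhs => rw [Nat.mod_eq_sub_mod hij, Nat.mod_eq_of_lt h2]
    have hcond : ¬ ((i : ℕ) ≤ (i : ℕ) + (j : ℕ) - n) := by
      have := j.isLt; omega
    rw [hval, if_neg hcond]
    have key : C (c i * a j) * X ^ ((i:ℕ)+(j:ℕ)) - C (c i * -a j) * X ^ ((i:ℕ)+(j:ℕ)-n)
        = C (c i * a j) * X ^ ((i:ℕ)+(j:ℕ)-n) * (X ^ n + 1) := by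
      have hfac : (X : F[X]) ^ ((i:ℕ) + (j:ℕ)) = X ^ ((i:ℕ) + (j:ℕ) - n) * X ^ n := by
        rw [← pow_add]; congr 1; omega
      rw [hfac]; simp only [map_mul, map_neg]; ring
    rw [key]
    exact dvd_mul_left _ _

lemma nega_sub {F : Type*} [Ring F] {n : ℕ} (a a' : Fin n → F) :
    negacirculantMatrix (a - a') = negacirculantMatrix a - negacirculantMatrix a' := by
  ext i j
  simp only [negacirculantMatrix, Matrix.of_apply, Matrix.sub_apply, Pi.sub_apply]
  split <;> abel

lemma fiber_bound {F : Type*} [Field F] [Fintype F] [DecidableEq F] {q n : ℕ}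
    (hcard : Fintype.card F = q) (hn2 : 2 ≤ n) (heven : n % 2 = 0)
    {h' h'' : F[X]} (hne : h' ≠ h'') (hm' : h'.Monic) (hm'' : h''.Monic)
    (hirr' : Irreducible h') (hirr'' : Irreducible h'')
    (hd' : h'.natDegree = n / 2) (hd'' : h''.natDegree = n / 2)
    (hfeq : (X ^ n + 1 : F[X]) = h' * h'')
    (c : Fin n → F) (hc : c ≠ 0) (b : Fin n → F) :
    (Finset.univ.filter fun a : Fin n → F =>
      Matrix.vecMul c (negacirculantMatrix a) = b).card ≤ q ^ (n / 2) := by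
  classical
  have hn0 : 0 < n := by omega
  set f : F[X] := X ^ n + 1 with hf
  have hfdeg : f.degree = (n : ℕ) := by
    rw [hf, show (1 : F[X]) = C 1 by simp, degree_X_pow_add_C hn0]
  -- vecPoly c ≠ 0
  have hPc : vecPoly c ≠ 0 := by
    obtain ⟨i, hi⟩ := Function.ne_iff.mp hc
    intro h0
    apply hi
    have := vecPoly_coeff c i
    rw [h0] at this
    simpa using this.symm
  -- not both h' and h'' divide vecPoly c
  have hnotboth : ¬ (h' ∣ vecPoly c ∧ h'' ∣ vecPoly c) := by
    rintro ⟨d1, d2⟩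
    have hcop : IsCoprime h' h'' := by
      rw [hirr'.coprime_iff_not_dvd]
      intro hdvd
      exact hne (eq_of_monic_of_associated hm' hm'' (hirr'.associated_of_dvd hirr'' hdvd))
    have hff : f ∣ vecPoly c := by rw [hfeq]; exact hcop.mul_dvd d1 d2
    have := degree_le_of_dvd hff hPc
    have h2 := vecPoly_degree c
    rw [hfdeg] at this
    exact absurd (lt_of_le_of_lt this h2) (lt_irrefl _)
  -- pick the factor not dividing vecPoly c
  obtain ⟨h, hmh, hirrh, hdh, hhf, hndvd⟩ :
      ∃ h : F[X], h.Monic ∧ Irreducible h ∧ h.natDegree = n / 2 ∧ h ∣ f ∧ ¬ h ∣ vecPoly c := by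
    rcases not_and_or.mp hnotboth with h1 | h2
    · exact ⟨h', hm', hirr', hd', by rw [hfeq]; exact dvd_mul_right _ _, h1⟩
    · exact ⟨h'', hm'', hirr'', hd'', by rw [hfeq]; exact dvd_mul_left _ _, h2⟩
  have hprime : Prime h := UniqueFactorizationMonoid.irreducible_iff_prime.mp hirrh
  set S := Finset.univ.filter fun a : Fin n → F =>
      Matrix.vecMul c (negacirculantMatrix a) = b with hS
  rcases S.eq_empty_or_nonempty with hSe | ⟨a₀, ha₀⟩
  · rw [hSe]; simp
  · have ha₀' : Matrix.vecMul c (negacirculantMatrix a₀) = b :=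
      (Finset.mem_filter.mp ha₀).2
    -- every a in the fiber gives h ∣ vecPoly (a - a₀)
    have hdvdP : ∀ a ∈ S, h ∣ vecPoly (a - a₀) := by
      intro a ha
      have ha' : Matrix.vecMul c (negacirculantMatrix a) = b := (Finset.mem_filter.mp ha).2
      have hL0 : Matrix.vecMul c (negacirculantMatrix (a - a₀)) = 0 := by
        rw [nega_sub, Matrix.vecMul_sub, ha', ha₀', sub_self]
      have hcong := vecPoly_mul_congr hn0 c (a - a₀)
      rw [hL0] at hcong
      have hP0 : vecPoly (0 : Fin n → F) = 0 := by simp [vecPoly]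
      rw [hP0, sub_zero] at hcong
      have : h ∣ vecPoly c * vecPoly (a - a₀) := dvd_trans hhf hcong
      exact (hprime.dvd_or_dvd this).resolve_left hndvd
    -- the quotient has small coefficients
    have hquot : ∀ a ∈ S, ∀ k : ℕ, n / 2 ≤ k → ((vecPoly (a - a₀)) /ₘ h).coeff k = 0 := by
      intro a ha k hk
      set e := vecPoly (a - a₀) with he
      by_cases he0 : e = 0
      · rw [he0, zero_divByMonic]; simp
      · apply coeff_eq_zero_of_natDegree_lt
        have h1 : (e /ₘ h).natDegree = e.natDegree - h.natDegree := natDegree_divByMonic e hmh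
        have h2 : e.natDegree < n := (natDegree_lt_iff_degree_lt he0).mpr (vecPoly_degree _)
        rw [h1, hdh]
        omega
    -- reconstruct e from the quotient
    have hrec : ∀ a ∈ S, vecPoly (a - a₀) = h * ((vecPoly (a - a₀)) /ₘ h) := by
      intro a ha
      have h0 := modByMonic_add_div (vecPoly (a - a₀)) h
      rw [(modByMonic_eq_zero_iff_dvd hmh).mpr (hdvdP a ha), zero_add] at h0
      exact h0.symm
    -- injection into Fin (n/2) → F
    have hinj : Set.InjOn (fun a : Fin n → F =>
        (fun k : Fin (n / 2) => ((vecPoly (a - a₀)) /ₘ h).coeff (k : ℕ))) S := by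
      intro a₁ ha₁ a₂ ha₂ heq
      simp only at heq
      have hE : (vecPoly (a₁ - a₀)) /ₘ h = (vecPoly (a₂ - a₀)) /ₘ h := by
        ext k
        by_cases hk : k < n / 2
        · exact congrFun heq ⟨k, hk⟩
        · rw [hquot a₁ (by exact_mod_cast ha₁) k (by omega),
            hquot a₂ (by exact_mod_cast ha₂) k (by omega)]
      have he12 : vecPoly (a₁ - a₀) = vecPoly (a₂ - a₀) := by
        rw [hrec a₁ (by exact_mod_cast ha₁), hrec a₂ (by exact_mod_cast ha₂), hE]
      have := vecPoly_inj (v := a₁ - a₀) (w := a₂ - a₀) he12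
      have : a₁ - a₀ = a₂ - a₀ := this
      exact sub_left_injective this
    have hcount := Finset.card_le_card_of_injOn
      (fun a : Fin n → F => (fun k : Fin (n / 2) => ((vecPoly (a - a₀)) /ₘ h).coeff (k : ℕ)))
      (fun a _ => Finset.mem_univ _) hinj
    calc S.card ≤ (Finset.univ : Finset (Fin (n / 2) → F)).card := hcount
      _ = q ^ (n / 2) := by rw [Finset.card_univ, Fintype.card_fun, hcard, Fintype.card_fin]

/-- Modified Gilbert–Varshamov bound for double negacirculant codes. Let `q` be an odd
prime power such that for every power of two `n` (`n ≥ 2`), `x^n + 1` factors over `F_q`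
as a product of two distinct monic irreducible reciprocal polynomials of degree `n/2`
(this holds for `q ≡ 3, 5 (mod 8)`). If `0 < δ < (q−1)/q` and `H_q(δ) < 1/4`, then for
all large enough powers of two `n` there is a double negacirculant code
`C_a = {(c, c·a)}` of length `2n` all of whose nonzero codewords have Hamming weight
greater than `2δn`. -/
theorem DN_codes_gilbert_varshamov
    {q : ℕ} (F : Type*) [Field F] [Fintype F] [DecidableEq F]
    (hcard : Fintype.card F = q) (hodd : Odd q)
    (hfac : ∀ n : ℕ, (∃ k : ℕ, n = 2 ^ k) → 2 ≤ n →
      ∃ h' h'' : F[X], h' ≠ h'' ∧ h'.Monic ∧ h''.Monic ∧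
        Irreducible h' ∧ Irreducible h'' ∧
        h'.natDegree = n / 2 ∧ h''.natDegree = n / 2 ∧ h'' = recip h' ∧
        (X ^ n + 1 : F[X]) = h' * h'')
    (δ : ℝ) (hδ0 : 0 < δ) (hδ1 : δ < (q - 1 : ℝ) / q) (hH : qEntropy q δ < 1 / 4) :
    ∃ N : ℕ, ∀ n : ℕ, (∃ k : ℕ, n = 2 ^ k) → N ≤ n →
      ∃ a : Fin n → F, ∀ c : Fin n → F, c ≠ 0 →
        2 * δ * n <
          (hammingNorm (Sum.elim c (Matrix.vecMul c (negacirculantMatrix a))) : ℝ) := by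
  classical
  refine ⟨2, fun n hpow hn2 => ?_⟩
  have hq2 : 2 ≤ q := by rw [← hcard]; exact Fintype.one_lt_card
  have hn0 : 0 < n := by omega
  have heven : n % 2 = 0 := by
    obtain ⟨k, rfl⟩ := hpow
    have hk : k ≠ 0 := by rintro rfl; omega
    have : 2 ∣ 2 ^ k := dvd_pow_self 2 hk
    omega
  obtain ⟨h', h'', hne, hm', hm'', hirr', hirr'', hd', hd'', -, hfeq⟩ := hfac n hpow hn2
  set r := ⌊2 * δ * (n : ℝ)⌋₊ with hr
  set L := fun (c a : Fin n → F) => Matrix.vecMul c (negacirculantMatrix a) with hL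
  set Bad := Finset.univ.filter fun a : Fin n → F =>
    ∃ c : Fin n → F, c ≠ 0 ∧ hammingNorm (Sum.elim c (L c a)) ≤ r with hBad
  set S := Finset.univ.filter fun p : (Fin n → F) × (Fin n → F) =>
    p.1 ≠ 0 ∧ hammingNorm (Sum.elim p.1 p.2) ≤ r with hSdef
  have hsub : Bad ⊆ S.biUnion fun p =>
      Finset.univ.filter fun a : Fin n → F => L p.1 a = p.2 := by
    intro a ha
    obtain ⟨-, c, hc0, hcw⟩ := Finset.mem_filter.mp ha
    refine Finset.mem_biUnion.mpr ⟨(c, L c a), ?_, ?_⟩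
    · exact Finset.mem_filter.mpr ⟨Finset.mem_univ _, hc0, hcw⟩
    · exact Finset.mem_filter.mpr ⟨Finset.mem_univ _, rfl⟩
  have h1 : Bad.card ≤ S.card * q ^ (n / 2) := by
    refine le_trans (Finset.card_le_card hsub) (le_trans Finset.card_biUnion_le ?_)
    have : ∀ p ∈ S, (Finset.univ.filter fun a : Fin n → F => L p.1 a = p.2).card
        ≤ q ^ (n / 2) := by
      intro p hp
      have hc0 : p.1 ≠ 0 := ((Finset.mem_filter.mp hp).2).1
      exact fiber_bound hcard hn2 heven hne hm' hm'' hirr' hirr'' hd' hd'' hfeq p.1 hc0 p.2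
    calc ∑ p ∈ S, (Finset.univ.filter fun a : Fin n → F => L p.1 a = p.2).card
        ≤ ∑ p ∈ S, q ^ (n / 2) := Finset.sum_le_sum this
      _ = S.card * q ^ (n / 2) := by rw [Finset.sum_const, smul_eq_mul]
  have h2 : S.card ≤
      (Finset.univ.filter fun v : (Fin n ⊕ Fin n) → F => hammingNorm v ≤ r).card := by
    apply Finset.card_le_card_of_injOn (fun p => Sum.elim p.1 p.2)
    · intro p hp
      exact Finset.mem_filter.mpr ⟨Finset.mem_univ _, ((Finset.mem_filter.mp hp).2).2⟩
    · intro p1 _ p2 _ heq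
      have e1 : p1.1 = p2.1 := funext fun i => congrFun heq (Sum.inl i)
      have e2 : p1.2 = p2.2 := funext fun i => congrFun heq (Sum.inr i)
      exact Prod.ext e1 e2
  have hcard2n : (Fintype.card (Fin n ⊕ Fin n)) = n + n := by
    simp [Fintype.card_sum]
  have hq0 : (0:ℝ) < q := by positivity
  have hq1 : (1:ℝ) < q := by exact_mod_cast Nat.lt_of_lt_of_le one_lt_two hq2
  have hrle : (r : ℝ) ≤ (Fintype.card (Fin n ⊕ Fin n) : ℝ) * δ := by
    rw [hcard2n]
    calc (r : ℝ) ≤ 2 * δ * (n : ℝ) := Nat.floor_le (by positivity)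
      _ = ((n + n : ℕ) : ℝ) * δ := by push_cast; ring
  have hball := ball_bound hcard hq2 hδ0 hδ1 hrle
  -- numeric comparison
  have hexp : (Fintype.card (Fin n ⊕ Fin n) : ℝ) * qEntropy q δ + ((n / 2 : ℕ) : ℝ)
      < (n : ℝ) := by
    have hhalf : ((n / 2 : ℕ) : ℝ) = (n : ℝ) / 2 := by
      have h2n : (2 : ℕ) * (n / 2) = n := by omega
      have : ((2 * (n / 2) : ℕ) : ℝ) = (n : ℝ) := by exact_mod_cast congrArg (Nat.cast (R := ℝ)) h2n
      push_cast at this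
      linarith
    rw [hcard2n, hhalf]
    have hn0' : (0:ℝ) < n := by exact_mod_cast hn0
    have : ((n + n : ℕ) : ℝ) = 2 * n := by push_cast; ring
    rw [this]
    nlinarith [hn0', hH]
  have hlt : ((S.card * q ^ (n / 2) : ℕ) : ℝ) < ((q ^ n : ℕ) : ℝ) := by
    push_cast
    calc (S.card : ℝ) * (q : ℝ) ^ (n / 2)
        ≤ ((Finset.univ.filter fun v : (Fin n ⊕ Fin n) → F =>
            hammingNorm v ≤ r).card : ℝ) * (q : ℝ) ^ (n / 2) := by
          apply mul_le_mul_of_nonneg_right (by exact_mod_cast h2) (by positivity)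
      _ ≤ (q : ℝ) ^ ((Fintype.card (Fin n ⊕ Fin n) : ℝ) * qEntropy q δ) *
            (q : ℝ) ^ (n / 2) := by
          apply mul_le_mul_of_nonneg_right hball (by positivity)
      _ = (q : ℝ) ^ ((Fintype.card (Fin n ⊕ Fin n) : ℝ) * qEntropy q δ + ((n / 2 : ℕ) : ℝ)) := by
          rw [Real.rpow_add hq0, Real.rpow_natCast]
      _ < (q : ℝ) ^ ((n : ℕ) : ℝ) := Real.rpow_lt_rpow_left_iff hq1 |>.mpr hexp
      _ = (q : ℝ) ^ n := Real.rpow_natCast _ _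
  have hBadlt : Bad.card < Fintype.card (Fin n → F) := by
    rw [Fintype.card_fun, hcard, Fintype.card_fin]
    have : Bad.card ≤ S.card * q ^ (n / 2) := h1
    have h3 : S.card * q ^ (n / 2) < q ^ n := by exact_mod_cast hlt
    omega
  have hex : ∃ a : Fin n → F, a ∉ Bad := by
    by_contra hcon
    push_neg at hcon
    have : (Finset.univ : Finset (Fin n → F)) ⊆ Bad := fun a _ => hcon a
    have := Finset.card_le_card this
    rw [Finset.card_univ] at this
    omega
  obtain ⟨a, ha⟩ := hex
  refine ⟨a, fun c hc => ?_⟩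
  have hnw : ¬ (hammingNorm (Sum.elim c (L c a)) ≤ r) := by
    intro hw
    exact ha (Finset.mem_filter.mpr ⟨Finset.mem_univ _, c, hc, hw⟩)
  push_neg at hnw
  have : (r : ℝ) + 1 ≤ (hammingNorm (Sum.elim c (L c a)) : ℝ) := by
    exact_mod_cast hnw
  calc 2 * δ * (n : ℝ) < (r : ℝ) + 1 := Nat.lt_floor_add_one _
    _ ≤ _ := this
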